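/- Let N ≥ 2, α, β > 0, λ, μ > 0, and define the operators T̃₁(v)(t) = ∫_t^1 (∫_0^s N τ^{N-1} λ v(τ)^α dτ)^{1/N} ds and T̃₂(v)(t) = ∫_t^1 (∫_0^s N τ^{N-1} μ v(τ)^β dτ)^{1/N} ds on the cone K = {v ∈ C[0,1] : v ≥ 0, min_{[1/4,3/4]} v ≥ (1/4)‖v‖}, and T̃ = T̃₁ ∘ T̃₂. If αβ = N² and v ∈ K ∖ {0} is a fixed point of T̃, then λ μ^{α/N} ≥ 1. -/

import Mathlib

open Set MeasureTheory intervalIntegral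
set_option maxHeartbeats 1000000

/-- Supremum norm on `C[0,1]`. -/
noncomputable def supNorm (v : ℝ → ℝ) : ℝ :=
  sSup ((fun t => |v t|) '' Icc (0:ℝ) 1)

/-- Membership in the cone `K ⊂ C[0,1]`. -/
def memK (v : ℝ → ℝ) : Prop :=
  ContinuousOn v (Icc (0:ℝ) 1) ∧ (∀ t ∈ Icc (0:ℝ) 1, 0 ≤ v t) ∧
    ∀ t ∈ Icc (1/4 : ℝ) (3/4), (1/4) * supNorm v ≤ v t

/-- The solution operator with parameter `c` and exponent `γ`. -/
noncomputable def MAopc (N : ℕ) (c γ : ℝ) (v : ℝ → ℝ) : ℝ → ℝ :=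
  fun t => ∫ s in t..(1:ℝ),
    (∫ τ in (0:ℝ)..s, (N:ℝ) * τ ^ (N - 1) * (c * v τ ^ γ)) ^ ((N:ℝ)⁻¹)

lemma aux_main (N : ℕ) (hN : 2 ≤ N) (c γ M : ℝ) (hc : 0 < c) (hγ : 0 < γ) (hM : 0 ≤ M)
    (v : ℝ → ℝ) (hvc : ContinuousOn v (Icc 0 1)) (hv0 : ∀ t ∈ Icc (0:ℝ) 1, 0 ≤ v t)
    (hvM : ∀ t ∈ Icc (0:ℝ) 1, v t ≤ M) :
    ContinuousOn (MAopc N c γ v) (Icc 0 1) ∧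
    (∀ t ∈ Icc (0:ℝ) 1, 0 ≤ MAopc N c γ v t) ∧
    (∀ t ∈ Icc (0:ℝ) 1, MAopc N c γ v t ≤ (c * M ^ γ) ^ ((N:ℝ)⁻¹)) := by
  have hNpos : (0:ℝ) < N := by positivity
  set h : ℝ → ℝ := fun τ => (N:ℝ) * τ ^ (N - 1) * (c * v τ ^ γ) with hh
  have hhc : ContinuousOn h (Icc 0 1) := by
    apply ContinuousOn.mul
    · exact (continuous_const.mul (continuous_pow _)).continuousOn
    · exact continuousOn_const.mul (hvc.rpow_const (fun x _ => Or.inr hγ.le))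
  have hhint : IntegrableOn h (Icc 0 1) := hhc.integrableOn_Icc
  have hhii : ∀ s ∈ Icc (0:ℝ) 1, IntervalIntegrable h volume 0 s := by
    intro s hs
    apply IntegrableOn.intervalIntegrable
    apply hhint.mono_set
    rw [uIcc_of_le hs.1]
    exact Icc_subset_Icc le_rfl hs.2
  set I : ℝ → ℝ := fun s => ∫ τ in (0:ℝ)..s, h τ with hI
  have hI0 : ∀ s ∈ Icc (0:ℝ) 1, 0 ≤ I s := by
    intro s hs
    apply intervalIntegral.integral_nonneg hs.1
    intro τ hτ
    have hτ1 : τ ∈ Icc (0:ℝ) 1 := ⟨hτ.1, hτ.2.trans hs.2⟩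
    have h2 : 0 ≤ v τ ^ γ := Real.rpow_nonneg (hv0 τ hτ1) γ
    have h3 : (0:ℝ) ≤ (N:ℝ) * τ ^ (N-1) := mul_nonneg (Nat.cast_nonneg N) (pow_nonneg hτ.1 _)
    exact mul_nonneg h3 (mul_nonneg hc.le h2)
  have hIle : ∀ s ∈ Icc (0:ℝ) 1, I s ≤ c * M ^ γ := by
    intro s hs
    have key : I s ≤ ∫ τ in (0:ℝ)..s, ((N:ℝ) * (c * M ^ γ)) * τ ^ (N - 1) := by
      apply intervalIntegral.integral_mono_on hs.1 (hhii s hs)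
      · exact (intervalIntegrable_pow _).const_mul _
      · intro τ hτ
        have hτ1 : τ ∈ Icc (0:ℝ) 1 := ⟨hτ.1, hτ.2.trans hs.2⟩
        have h1 : v τ ^ γ ≤ M ^ γ := Real.rpow_le_rpow (hv0 τ hτ1) (hvM τ hτ1) hγ.le
        have h2 : (0:ℝ) ≤ τ ^ (N - 1) := pow_nonneg hτ.1 _
        have h3 : (0:ℝ) ≤ (N:ℝ) := hNpos.le
        calc (N:ℝ) * τ ^ (N - 1) * (c * v τ ^ γ)
            ≤ (N:ℝ) * τ ^ (N - 1) * (c * M ^ γ) := by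
              apply mul_le_mul_of_nonneg_left _ (by positivity)
              exact mul_le_mul_of_nonneg_left h1 hc.le
          _ = ((N:ℝ) * (c * M ^ γ)) * τ ^ (N - 1) := by ring
    rw [intervalIntegral.integral_const_mul, integral_pow] at key
    have hNsub : N - 1 + 1 = N := Nat.succ_pred_eq_of_pos (show 0 < N by omega)
    have hden : ((N - 1 : ℕ) : ℝ) + 1 = (N : ℝ) := by
      rw [Nat.cast_sub (show 1 ≤ N by omega), Nat.cast_one]; ring
    rw [hNsub, hden] at key
    have h0N : (0:ℝ) ^ N = 0 := zero_pow (by omega)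
    rw [h0N] at key
    have hsN : s ^ N ≤ 1 := pow_le_one₀ hs.1 hs.2
    calc I s ≤ (N:ℝ) * (c * M ^ γ) * ((s ^ N - 0) / N) := key
      _ = (c * M ^ γ) * s ^ N := by field_simp; ring
      _ ≤ (c * M ^ γ) * 1 := by
          apply mul_le_mul_of_nonneg_left hsN (by positivity)
      _ = c * M ^ γ := mul_one _
  set g : ℝ → ℝ := fun s => I s ^ ((N:ℝ)⁻¹) with hg
  have hIcont : ContinuousOn I (Icc 0 1) := by
    have := continuousOn_primitive_interval (a := (0:ℝ)) (b := 1) (μ := volume)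
      (f := h) (by rwa [uIcc_of_le zero_le_one])
    rwa [uIcc_of_le zero_le_one] at this
  have hgcont : ContinuousOn g (Icc 0 1) :=
    hIcont.rpow_const (fun x _ => Or.inr (by positivity))
  have hgint : IntegrableOn g (Icc 0 1) := hgcont.integrableOn_Icc
  have hgii : ∀ t ∈ Icc (0:ℝ) 1, IntervalIntegrable g volume t 1 := by
    intro t ht
    apply IntegrableOn.intervalIntegrable
    apply hgint.mono_set
    rw [uIcc_of_le ht.2]
    exact Icc_subset_Icc ht.1 le_rfl
  have hg0 : ∀ s ∈ Icc (0:ℝ) 1, 0 ≤ g s := fun s hs => Real.rpow_nonneg (hI0 s hs) _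
  have hgB : ∀ s ∈ Icc (0:ℝ) 1, g s ≤ (c * M ^ γ) ^ ((N:ℝ)⁻¹) := by
    intro s hs
    exact Real.rpow_le_rpow (hI0 s hs) (hIle s hs) (by positivity)
  refine ⟨?_, ?_, ?_⟩
  · have := continuousOn_primitive_interval_left (a := (0:ℝ)) (b := 1) (μ := volume)
      (f := g) (by rwa [uIcc_of_le zero_le_one])
    rw [uIcc_of_le zero_le_one] at this
    exact this
  · intro t ht
    apply intervalIntegral.integral_nonneg ht.2
    intro s hs
    exact hg0 s ⟨ht.1.trans hs.1, hs.2⟩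
  · intro t ht
    have key : MAopc N c γ v t ≤ ∫ _s in t..(1:ℝ), (c * M ^ γ) ^ ((N:ℝ)⁻¹) := by
      apply intervalIntegral.integral_mono_on ht.2 (hgii t ht) intervalIntegrable_const
      intro s hs
      exact hgB s ⟨ht.1.trans hs.1, hs.2⟩
    rw [intervalIntegral.integral_const, smul_eq_mul] at key
    calc MAopc N c γ v t ≤ (1 - t) * (c * M ^ γ) ^ ((N:ℝ)⁻¹) := key
      _ ≤ 1 * (c * M ^ γ) ^ ((N:ℝ)⁻¹) := by
          apply mul_le_mul_of_nonneg_right _ (Real.rpow_nonneg (by positivity) _)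
          linarith [ht.1]
      _ = _ := one_mul _

theorem stmt12 (N : ℕ) (hN : 2 ≤ N) (α β lam mu : ℝ)
    (hα : 0 < α) (hβ : 0 < β) (hlam : 0 < lam) (hmu : 0 < mu)
    (hαβ : α * β = (N:ℝ) ^ 2)
    (v : ℝ → ℝ) (hv : memK v) (hne : ∃ t ∈ Icc (0:ℝ) 1, v t ≠ 0)
    (hfix : ∀ t ∈ Icc (0:ℝ) 1, MAopc N lam α (MAopc N mu β v) t = v t) :
    1 ≤ lam * mu ^ (α / N) := by
  obtain ⟨hvc, hv0, -⟩ := hv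
  have hNpos : (0:ℝ) < N := by positivity
  set M := supNorm v with hMdef
  have hne' : ((fun t => |v t|) '' Icc (0:ℝ) 1).Nonempty :=
    ⟨|v 0|, ⟨0, ⟨le_rfl, zero_le_one⟩, rfl⟩⟩
  have hbdd : BddAbove ((fun t => |v t|) '' Icc (0:ℝ) 1) :=
    (isCompact_Icc.image_of_continuousOn hvc.abs).bddAbove
  have hle : ∀ t ∈ Icc (0:ℝ) 1, v t ≤ M := fun t ht =>
    (le_abs_self _).trans (le_csSup hbdd ⟨t, ht, rfl⟩)
  have hMpos : 0 < M := by
    obtain ⟨t0, ht0, hne0⟩ := hne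
    exact lt_of_lt_of_le (lt_of_le_of_ne (hv0 t0 ht0) (Ne.symm hne0)) (hle t0 ht0)
  -- bound on w := MAopc N mu β v
  obtain ⟨hwc, hw0, hwM⟩ := aux_main N hN mu β M hmu hβ hMpos.le v hvc hv0 hle
  set M₂ : ℝ := (mu * M ^ β) ^ ((N:ℝ)⁻¹) with hM2def
  have hM2pos : 0 < M₂ := Real.rpow_pos_of_pos (mul_pos hmu (Real.rpow_pos_of_pos hMpos β)) _
  obtain ⟨-, -, hB⟩ := aux_main N hN lam α M₂ hlam hα hM2pos.le _ hwc hw0 hwM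
  set B : ℝ := (lam * M₂ ^ α) ^ ((N:ℝ)⁻¹) with hBdef
  have hBpos : 0 < B := Real.rpow_pos_of_pos (mul_pos hlam (Real.rpow_pos_of_pos hM2pos α)) _
  have hMB : M ≤ B := by
    apply csSup_le hne'
    rintro y ⟨t, ht, rfl⟩
    show |v t| ≤ B
    rw [abs_of_nonneg (hv0 t ht), ← hfix t ht]
    exact hB t ht
  -- take logs
  set r : ℝ := (N:ℝ)⁻¹ with hrdef
  have hr : 0 < r := by positivity
  have hlogM2 : Real.log M₂ = r * (Real.log mu + β * Real.log M) := by
    rw [hM2def, Real.log_rpow (mul_pos hmu (Real.rpow_pos_of_pos hMpos β)),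
      Real.log_mul hmu.ne' (Real.rpow_pos_of_pos hMpos β).ne', Real.log_rpow hMpos]
  have hlogB : Real.log B = r * (Real.log lam + α * Real.log M₂) := by
    rw [hBdef, Real.log_rpow (mul_pos hlam (Real.rpow_pos_of_pos hM2pos α)),
      Real.log_mul hlam.ne' (Real.rpow_pos_of_pos hM2pos α).ne', Real.log_rpow hM2pos]
  have hloglog : Real.log M ≤ Real.log B := Real.log_le_log hMpos hMB
  rw [hlogB, hlogM2] at hloglog
  have habr : α * β * (r * r) = 1 := by
    rw [hαβ, hrdef]
    field_simp
  have e0 : r * (Real.log lam + α * (r * (Real.log mu + β * Real.log M)))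
      = r * Real.log lam + (α * (r * r)) * Real.log mu + (α * β * (r * r)) * Real.log M := by
    ring
  rw [e0, habr, one_mul] at hloglog
  have h3 : 0 ≤ r * (Real.log lam + (α * r) * Real.log mu) := by nlinarith [hloglog]
  have key : 0 ≤ Real.log lam + (α * r) * Real.log mu :=
    le_of_mul_le_mul_left (by rw [mul_zero]; exact h3) hr
  have hX : Real.log (lam * mu ^ (α / N)) = Real.log lam + (α * r) * Real.log mu := by
    rw [Real.log_mul hlam.ne' (Real.rpow_pos_of_pos hmu _).ne', Real.log_rpow hmu,
      div_eq_mul_inv, hrdef]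
  have hXpos : 0 < lam * mu ^ (α / N) := mul_pos hlam (Real.rpow_pos_of_pos hmu _)
  rw [← Real.exp_log hXpos, ← Real.exp_zero]
  exact Real.exp_le_exp.mpr (by rw [hX]; exact key)
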